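/- For every n and d ≥ 2, F_d(n) equals the minimum N such that every increasing d-dimensional array of size N × ... × N contains an n × ... × n subarray that is lexicographic of type σ for some permutation σ of [d]. -/
import Mathlib


/-- Lexicographic order on `Fin d → ℤ`. -/
def lexLt {d : ℕ} (x y : Fin d → ℤ) : Prop :=
  ∃ i : Fin d, (∀ j, j < i → x j = y j) ∧ x i < y i

/-- `f` is a monotone array on all of `[N]^d`: along each coordinate, all
axis-parallel lines are increasing or all are decreasing. -/
def MonoArr {d N : ℕ} (f : (Fin d → Fin N) → ℝ) : Prop :=
  ∀ i : Fin d,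
    (∀ x : Fin d → Fin N, ∀ u v : Fin N, u < v →
      f (Function.update x i u) < f (Function.update x i v)) ∨
    (∀ x : Fin d → Fin N, ∀ u v : Fin N, u < v →
      f (Function.update x i v) < f (Function.update x i u))

/-- `f` is increasing: `f x ≤ f y` whenever `x ≤ y` coordinatewise. -/
def IncArr {d N : ℕ} (f : (Fin d → Fin N) → ℝ) : Prop :=
  ∀ x y : Fin d → Fin N, (∀ i, x i ≤ y i) → f x ≤ f y

/-- `f` restricted to the subgrid `A` is lex-monotone. -/
def LexMonoOn {d N : ℕ} (f : (Fin d → Fin N) → ℝ)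
    (A : Fin d → Finset (Fin N)) : Prop :=
  ∃ (σ : Equiv.Perm (Fin d)) (s : Fin d → ℤ), (∀ i, s i = 1 ∨ s i = -1) ∧
    ∀ x y : Fin d → Fin N, (∀ i, x i ∈ A i) → (∀ i, y i ∈ A i) →
      (f x < f y ↔
        lexLt (fun i => s (σ i) * (x (σ i) : ℤ)) (fun i => s (σ i) * (y (σ i) : ℤ)))

/-- `f` restricted to the subgrid `A` is lexicographic of type `σ` for some
permutation `σ`. -/
def LexTypeOn {d N : ℕ} (f : (Fin d → Fin N) → ℝ)
    (A : Fin d → Finset (Fin N)) : Prop :=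
  ∃ σ : Equiv.Perm (Fin d),
    ∀ x y : Fin d → Fin N, (∀ i, x i ∈ A i) → (∀ i, y i ∈ A i) →
      (f x < f y ↔ lexLt (fun i => (x (σ i) : ℤ)) (fun i => (y (σ i) : ℤ)))

lemma lexLt_add {d : ℕ} (a b c : Fin d → ℤ) :
    lexLt (fun i => a i + c i) (fun i => b i + c i) ↔ lexLt a b := by
  unfold lexLt
  constructor
  · rintro ⟨i, h1, h2⟩
    have h2' : a i + c i < b i + c i := h2
    refine ⟨i, fun j hj => ?_, by omega⟩
    have h1' : a j + c j = b j + c j := h1 j hj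
    omega
  · rintro ⟨i, h1, h2⟩
    refine ⟨i, fun j hj => ?_, ?_⟩
    · have h1' : a j = b j := h1 j hj
      show a j + c j = b j + c j
      omega
    · show a i + c i < b i + c i
      omega

lemma incArr_of_strict {d N : ℕ} (f : (Fin d → Fin N) → ℝ)
    (h : ∀ (i : Fin d) (x : Fin d → Fin N) (u v : Fin N), u < v →
      f (Function.update x i u) < f (Function.update x i v)) :
    IncArr f := by
  classical
  intro x y hxy
  suffices H : ∀ (S : Finset (Fin d)) (x : Fin d → Fin N), (∀ i, x i ≤ y i) →
      (∀ i, i ∉ S → x i = y i) → f x ≤ f y by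
    exact H Finset.univ x hxy (fun i hi => absurd (Finset.mem_univ i) hi)
  intro S
  induction S using Finset.induction with
  | empty =>
    intro x hle heq
    have : x = y := funext fun i => heq i (by simp)
    rw [this]
  | @insert a s ha ih =>
    intro x hle heq
    rcases lt_or_eq_of_le (hle a) with hlt | heqa
    · have h1 : f x ≤ f (Function.update x a (y a)) := by
        have h2 := h a x (x a) (y a) hlt
        rw [Function.update_eq_self] at h2
        exact le_of_lt h2
      refine le_trans h1 (ih (Function.update x a (y a)) ?_ ?_)
      · intro i
        by_cases hi : i = a
        · subst hi; simp
        · rw [Function.update_of_ne hi]; exact hle i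
      · intro i hi
        by_cases hia : i = a
        · subst hia; simp
        · rw [Function.update_of_ne hia]
          exact heq i (by simp [Finset.mem_insert, hia, hi])
    · refine ih x hle (fun i hi => ?_)
      by_cases hia : i = a
      · subst hia; exact heqa
      · exact heq i (by simp [Finset.mem_insert, hia, hi])

theorem stmt_14 (d n : ℕ) (hd : 2 ≤ d) :
    sInf {N : ℕ | ∀ f : (Fin d → Fin N) → ℝ, Function.Injective f → MonoArr f →
      ∃ A : Fin d → Finset (Fin N), (∀ i, (A i).card = n) ∧ LexMonoOn f A} =
    sInf {N : ℕ | ∀ f : (Fin d → Fin N) → ℝ, Function.Injective f → IncArr f →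
      ∃ A : Fin d → Finset (Fin N), (∀ i, (A i).card = n) ∧ LexTypeOn f A} := by
  classical
  congr 1
  ext N
  simp only [Set.mem_setOf_eq]
  constructor
  · -- the "mono" condition implies the "inc" condition
    intro hN f hfinj hfinc
    have hmono : MonoArr f := by
      intro i
      left
      intro x u v huv
      have hle : f (Function.update x i u) ≤ f (Function.update x i v) := by
        apply hfinc
        intro j
        by_cases hj : j = i
        · subst hj; simp [le_of_lt huv]
        · simp [Function.update_of_ne hj]
      have hne : Function.update x i u ≠ Function.update x i v := by
        intro hcontra
        have h2 := congrFun hcontra i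
        simp only [Function.update_self] at h2
        exact absurd h2 (ne_of_lt huv)
      exact lt_of_le_of_ne hle (fun h => hne (hfinj h))
    obtain ⟨A, hcard, σ, s, hs, hiff⟩ := hN f hfinj hmono
    refine ⟨A, hcard, ?_⟩
    rcases Nat.lt_or_ge n 2 with hn | hn
    · interval_cases n
      · -- n = 0 : no point lies in the subgrid
        refine ⟨σ, fun x y hx hy => ?_⟩
        have h0 : x ⟨0, by omega⟩ ∈ A ⟨0, by omega⟩ := hx _
        rw [Finset.card_eq_zero.mp (hcard _)] at h0
        simp at h0
      · -- n = 1 : any two points of the subgrid coincide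
        refine ⟨σ, fun x y hx hy => ?_⟩
        have hxy : x = y := by
          funext i
          obtain ⟨a, ha⟩ := Finset.card_eq_one.mp (hcard i)
          have h1 := hx i; have h2 := hy i
          rw [ha, Finset.mem_singleton] at h1 h2
          rw [h1, h2]
        subst hxy
        simp [lexLt]
    · -- n ≥ 2 : all signs must be +1 since f is increasing
      have hs1 : ∀ k, s k = 1 := by
        intro k
        rcases hs k with h1 | hm1
        · exact h1
        · exfalso
          have hne : ∀ i, (A i).Nonempty := fun i =>
            Finset.card_pos.mp (by rw [hcard i]; omega)
          choose x0 hx0 using hne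
          have key : ∀ u v : Fin N, u ∈ A k → v ∈ A k → u < v → False := by
            intro u v hu hv hlt
            set x' := Function.update x0 k u with hx'def
            set y' := Function.update x0 k v with hy'def
            have hx' : ∀ i, x' i ∈ A i := by
              intro i
              by_cases hi : i = k
              · subst hi; simpa [hx'def] using hu
              · simpa [hx'def, Function.update_of_ne hi] using hx0 i
            have hy' : ∀ i, y' i ∈ A i := by
              intro i
              by_cases hi : i = k
              · subst hi; simpa [hy'def] using hv
              · simpa [hy'def, Function.update_of_ne hi] using hx0 i
            have hfxy : f x' < f y' := by
              refine lt_of_le_of_ne (hfinc _ _ ?_) (fun h => ?_)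
              · intro j
                by_cases hj : j = k
                · subst hj; simp [hx'def, hy'def, le_of_lt hlt]
                · simp [hx'def, hy'def, Function.update_of_ne hj]
              · have h2 := congrFun (hfinj h) k
                simp only [hx'def, hy'def, Function.update_self] at h2
                exact absurd h2 (ne_of_lt hlt)
            obtain ⟨i, hprev, hi⟩ := (hiff x' y' hx' hy').mp hfxy
            have hi' : s (σ i) * ((x' (σ i) : ℕ) : ℤ) <
                s (σ i) * ((y' (σ i) : ℕ) : ℤ) := hi
            by_cases hik : σ i = k
            · rw [hik] at hi'
              have hxk : x' k = u := by simp [hx'def]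
              have hyk : y' k = v := by simp [hy'def]
              rw [hxk, hyk, hm1] at hi'
              have hnat : (u : ℕ) < (v : ℕ) := hlt
              have : ((v : ℕ) : ℤ) < ((u : ℕ) : ℤ) := by
                simpa using hi'
              omega
            · have heqc : x' (σ i) = y' (σ i) := by
                simp [hx'def, hy'def, Function.update_of_ne hik]
              rw [heqc] at hi'
              exact lt_irrefl _ hi'
          obtain ⟨u, hu, v, hv, huv⟩ := Finset.one_lt_card.mp
            (by rw [hcard k]; omega : 1 < (A k).card)
          rcases lt_or_gt_of_ne huv with hlt | hlt
          · exact key u v hu hv hlt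
          · exact key v u hv hu hlt
      refine ⟨σ, fun x y hx hy => ?_⟩
      rw [hiff x y hx hy]
      have e1 : (fun i => s (σ i) * (x (σ i) : ℤ)) = fun i => (x (σ i) : ℤ) := by
        funext i; rw [hs1, one_mul]
      have e2 : (fun i => s (σ i) * (y (σ i) : ℤ)) = fun i => (y (σ i) : ℤ) := by
        funext i; rw [hs1, one_mul]
      rw [e1, e2]
  · -- the "inc" condition implies the "mono" condition
    intro hN f hfinj hfmono
    have hφ : ∀ i : Fin d, ∃ (φi : Fin N → Fin N) (si ci : ℤ),
        Function.Involutive φi ∧ (si = 1 ∨ si = -1) ∧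
        (∀ u : Fin N, ((φi u : ℕ) : ℤ) = si * (u : ℕ) + ci) ∧
        (∀ x u v, u < v →
          f (Function.update x i (φi u)) < f (Function.update x i (φi v))) := by
      intro i
      rcases hfmono i with hinc | hdec
      · exact ⟨id, 1, 0, (fun _ => rfl), Or.inl rfl,
          fun u => by simp, fun x u v huv => hinc x u v huv⟩
      · refine ⟨Fin.rev, -1, (N : ℤ) - 1, Fin.rev_involutive, Or.inr rfl,
          fun u => ?_, fun x u v huv => ?_⟩
        · have h1 : (Fin.rev u : ℕ) = N - (u + 1) := Fin.val_rev u
          have h2 : (u : ℕ) < N := u.isLt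
          rw [h1]
          omega
        · exact hdec x (Fin.rev v) (Fin.rev u) (Fin.rev_lt_rev.mpr huv)
    choose φ s c hinv hs hlin hstrict using hφ
    set g : (Fin d → Fin N) → ℝ := fun x => f (fun i => φ i (x i)) with hgdef
    have hΦinj : Function.Injective (fun (x : Fin d → Fin N) i => φ i (x i)) := by
      intro a b hab
      funext i
      have := congrFun hab i
      have h2 := congrArg (φ i) this
      rwa [hinv i, hinv i] at h2
    have hginj : Function.Injective g := fun a b hab => hΦinj (hfinj hab)
    have hgstrict : ∀ (i : Fin d) (x : Fin d → Fin N) (u v : Fin N), u < v →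
        g (Function.update x i u) < g (Function.update x i v) := by
      intro i x u v huv
      have key : ∀ w : Fin N, (fun j => φ j (Function.update x i w j)) =
          Function.update (fun j => φ j (x j)) i (φ i w) := by
        intro w
        funext j
        by_cases hj : j = i
        · subst hj; simp
        · simp [Function.update_of_ne hj]
      show f _ < f _
      rw [key u, key v]
      exact hstrict i _ u v huv
    have hginc : IncArr g := incArr_of_strict g hgstrict
    obtain ⟨A', hcard', σ, hσ⟩ := hN g hginj hginc
    refine ⟨fun i => (A' i).image (φ i), fun i => by
      rw [Finset.card_image_of_injective _ (hinv i).injective]; exact hcard' i,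
      σ, s, hs, ?_⟩
    intro x y hx hy
    have hx' : ∀ i, φ i (x i) ∈ A' i := by
      intro i
      obtain ⟨a, ha, hax⟩ := Finset.mem_image.mp (hx i)
      rw [← hax, hinv i]; exact ha
    have hy' : ∀ i, φ i (y i) ∈ A' i := by
      intro i
      obtain ⟨a, ha, hay⟩ := Finset.mem_image.mp (hy i)
      rw [← hay, hinv i]; exact ha
    have hfx : f x = g (fun i => φ i (x i)) := by
      rw [hgdef]
      congr 1
      funext i
      rw [hinv i]
    have hfy : f y = g (fun i => φ i (y i)) := by
      rw [hgdef]
      congr 1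
      funext i
      rw [hinv i]
    rw [hfx, hfy, hσ _ _ hx' hy']
    have e1 : (fun i => ((φ (σ i) (x (σ i)) : ℕ) : ℤ)) =
        fun i => s (σ i) * ((x (σ i) : ℕ) : ℤ) + c (σ i) := by
      funext i; exact hlin (σ i) (x (σ i))
    have e2 : (fun i => ((φ (σ i) (y (σ i)) : ℕ) : ℤ)) =
        fun i => s (σ i) * ((y (σ i) : ℕ) : ℤ) + c (σ i) := by
      funext i; exact hlin (σ i) (y (σ i))
    rw [e1, e2, lexLt_add]
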